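/- For integers m ≥ 1 and k with gcd(m,k) = 1, the product over all complex λ with λ^{3m} = 1 of |1 + λ^m + λ^{2m} - λ^k - λ^{m+k}| equals 3^m - 2^m. -/

import Mathlib

open Polynomial

lemma aux_prod_sub (m : ℕ) (hm : 1 ≤ m) {μ : ℂ} (hμ : IsPrimitiveRoot μ m) (c : ℂ) :
    ∏ j ∈ Finset.range m, (c - μ ^ j) = c ^ m - 1 := by
  have hroots : (X ^ m - C 1 : ℂ[X]).roots = (Multiset.range m).map (fun j => μ ^ j * 1) := by
    simpa [Polynomial.nthRoots] using hμ.nthRoots_eq (one_pow m)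
  have hmonic : (X ^ m - C (1 : ℂ)).Monic := monic_X_pow_sub_C 1 (by omega)
  have hcard : Multiset.card (X ^ m - C 1 : ℂ[X]).roots = (X ^ m - C (1 : ℂ)).natDegree := by
    rw [hroots, Multiset.card_map, Multiset.card_range, natDegree_X_pow_sub_C]
  have hfact := prod_multiset_X_sub_C_of_monic_of_roots_card_eq hmonic hcard
  have h := congrArg (Polynomial.eval c) hfact
  rw [eval_multiset_prod, hroots] at h
  simp only [Multiset.map_map, Function.comp, eval_sub, eval_X, eval_C, mul_one,
    eval_pow] at h
  calc ∏ j ∈ Finset.range m, (c - μ ^ j)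
      = ((Multiset.range m).map fun j => c - μ ^ j).prod := by
        rw [Finset.prod_eq_multiset_prod, Finset.range_val]
    _ = c ^ m - 1 := h

/-- For m ≥ 1, gcd(m,k) = 1, the product over all complex λ with λ^{3m} = 1 of
|1 + λ^m + λ^{2m} - λ^k - λ^{m+k}| equals 3^m - 2^m. -/
theorem stmt_8 (m : ℕ) (hm : 1 ≤ m) (k : ℤ) (hmk : Int.gcd (m : ℤ) k = 1) :
    ((X ^ (3 * m) - C 1 : ℂ[X]).roots.map
      (fun lam => ‖1 + lam ^ m + lam ^ (2 * m) - lam ^ k - lam ^ ((m : ℤ) + k)‖)).prod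
      = 3 ^ m - 2 ^ m := by
  have h3m : 3 * m ≠ 0 := by omega
  obtain ⟨ζ, hζ⟩ : ∃ ζ : ℂ, IsPrimitiveRoot ζ (3 * m) :=
    ⟨_, Complex.isPrimitiveRoot_exp _ h3m⟩
  set F : ℂ → ℝ := fun lam =>
    ‖1 + lam ^ m + lam ^ (2 * m) - lam ^ k - lam ^ ((m : ℤ) + k)‖ with hF
  set ω : ℂ := ζ ^ m with hωdef
  set η : ℂ := ζ ^ 3 with hηdef
  have hω : IsPrimitiveRoot ω 3 := hζ.pow (by omega) (by ring)
  have hη : IsPrimitiveRoot η m := hζ.pow (by omega) rfl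
  have habsζ : ‖ζ‖ = 1 := by
    exact Complex.norm_eq_one_of_pow_eq_one hζ.pow_eq_one h3m
  have hζ0 : ζ ≠ 0 := by
    intro h; rw [h] at habsζ; simp at habsζ
  have habsω : ‖ω‖ = 1 := by rw [hωdef, norm_pow, habsζ, one_pow]
  have hω3 : ω ^ 3 = 1 := hω.pow_eq_one
  have hsum : 1 + ω + ω ^ 2 = 0 := by
    have := hω.geom_sum_eq_zero (by norm_num)
    simpa [Finset.sum_range_succ, add_assoc] using this
  -- value of F on λ with λ ^ m = ω ^ i
  have hkey : ∀ (i : ℕ) (lam : ℂ), lam ≠ 0 → lam ^ m = ω ^ i →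
      F lam = ‖(1 + ω ^ i + (ω ^ i) ^ 2) - lam ^ k * (1 + ω ^ i)‖ := by
    intro i lam h0 hlm
    have h2m : lam ^ (2 * m) = (ω ^ i) ^ 2 := by
      rw [two_mul, pow_add, hlm]; ring
    have hmk' : lam ^ ((m : ℤ) + k) = ω ^ i * lam ^ k := by
      rw [zpow_add₀ h0, zpow_natCast, hlm]
    rw [hF]
    simp only [hlm, h2m, hmk']
    congr 1
    ring
  -- i = 1 and i = 2 give factor 1
  have habs_ne : ∀ (lam : ℂ), ‖lam‖ = 1 → ‖lam ^ k‖ = 1 := by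
    intro lam hl
    rw [norm_zpow, hl, one_zpow]
  have hone : ∀ (i : ℕ) (lam : ℂ), lam ≠ 0 → ‖lam‖ = 1 →
      lam ^ m = ω ^ i → (i = 1 ∨ i = 2) → F lam = 1 := by
    intro i lam h0 habs hlm hi
    rw [hkey i lam h0 hlm]
    have hzero : 1 + ω ^ i + (ω ^ i) ^ 2 = 0 := by
      rcases hi with rfl | rfl
      · simpa using hsum
      · have : (ω ^ 2) ^ 2 = ω := by
          rw [← pow_mul]
          calc ω ^ (2 * 2) = ω ^ 3 * ω := by ring
          _ = ω := by rw [hω3, one_mul]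
        rw [this]
        linear_combination hsum
    rw [hzero, zero_sub, norm_neg, norm_mul, habs_ne lam habs]
    have habs1ω : ∀ j : ℕ, 1 + ω ^ j + (ω ^ j) ^ 2 = 0 → ‖1 + ω ^ j‖ = 1 := by
      intro j hj
      have : 1 + ω ^ j = -(ω ^ j) ^ 2 := by linear_combination hj
      rw [this, norm_neg, norm_pow, norm_pow, habsω, one_pow, one_pow]
    rw [one_mul, habs1ω i hzero]
  -- roots as a multiset
  have hroots : (X ^ (3 * m) - C 1 : ℂ[X]).roots
      = (Multiset.range (3 * m)).map (fun t => ζ ^ t * 1) := by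
    simpa [Polynomial.nthRoots] using hζ.nthRoots_eq (one_pow (3 * m))
  rw [hroots, Multiset.map_map]
  have hms : (Multiset.map (F ∘ fun t => ζ ^ t * 1) (Multiset.range (3 * m))).prod
      = ∏ t ∈ Finset.range (3 * m), F (ζ ^ t) := by
    rw [Finset.prod_eq_multiset_prod, Finset.range_val]
    congr 1
    apply Multiset.map_congr rfl
    intro t _
    simp
  rw [hms]
  -- reindex by (i, j) ↦ i + 3 * j
  have hre : ∏ t ∈ Finset.range (3 * m), F (ζ ^ t)
      = ∏ p ∈ Finset.range 3 ×ˢ Finset.range m, F (ζ ^ (p.1 + 3 * p.2)) := by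
    refine Finset.prod_bij' (fun t _ => (t % 3, t / 3)) (fun p _ => p.1 + 3 * p.2)
      ?_ ?_ ?_ ?_ ?_
    · intro t ht
      simp only [Finset.mem_range] at ht
      simp only [Finset.mem_product, Finset.mem_range]
      omega
    · intro p hp
      simp only [Finset.mem_product, Finset.mem_range] at hp
      simp only [Finset.mem_range]
      omega
    · intro t ht
      show t % 3 + 3 * (t / 3) = t
      omega
    · intro p hp
      simp only [Finset.mem_product, Finset.mem_range] at hp
      ext <;> simp <;> omega
    · intro t ht
      have : t % 3 + 3 * (t / 3) = t := by omega
      rw [this]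
  rw [hre, Finset.prod_product]
  -- the power identity
  have hpow : ∀ i j : ℕ, (ζ ^ (i + 3 * j)) ^ m = ω ^ i := by
    intro i j
    rw [← pow_mul]
    have : (i + 3 * j) * m = m * i + (3 * m) * j := by ring
    rw [this, pow_add, pow_mul, pow_mul, hζ.pow_eq_one, one_pow, mul_one, ← hωdef]
  have hne : ∀ t : ℕ, (ζ ^ t : ℂ) ≠ 0 := fun t => pow_ne_zero t hζ0
  have habst : ∀ t : ℕ, ‖ζ ^ t‖ = 1 := fun t => by
    rw [norm_pow, habsζ, one_pow]
  -- expand product over i < 3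
  rw [Finset.prod_range_succ, Finset.prod_range_succ, Finset.prod_range_one]
  have h1 : ∏ j ∈ Finset.range m, F (ζ ^ (1 + 3 * j)) = 1 := by
    apply Finset.prod_eq_one
    intro j _
    exact hone 1 _ (hne _) (habst _) (by simpa using hpow 1 j) (Or.inl rfl)
  have h2 : ∏ j ∈ Finset.range m, F (ζ ^ (2 + 3 * j)) = 1 := by
    apply Finset.prod_eq_one
    intro j _
    exact hone 2 _ (hne _) (habst _) (hpow 2 j) (Or.inr rfl)
  rw [h1, h2, mul_one, mul_one]
  -- the i = 0 part
  set μ : ℂ := η ^ k with hμdef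
  have hμ : IsPrimitiveRoot μ m := by
    apply hη.zpow_of_gcd_eq_one
    rwa [Int.gcd_comm]
  have hη0 : η ≠ 0 := pow_ne_zero 3 hζ0
  have hstep : ∀ j : ℕ, ζ ^ (0 + 3 * j) = η ^ j := by
    intro j; rw [zero_add, hηdef, ← pow_mul]
  have hzk : ∀ j : ℕ, (η ^ j) ^ (k : ℤ) = μ ^ j := by
    intro j
    rw [hμdef, ← zpow_natCast η j, ← zpow_mul, mul_comm, zpow_mul, zpow_natCast]
  have hval : ∀ j : ℕ, F (ζ ^ (0 + 3 * j)) = ‖3 - 2 * μ ^ j‖ := by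
    intro j
    rw [hstep j, hkey 0 _ (pow_ne_zero _ hη0) (by rw [← hstep j]; exact hpow 0 j)]
    rw [hzk j]
    norm_num
    congr 1
    ring
  rw [Finset.prod_congr rfl (fun j _ => hval j)]
  -- compute the remaining product
  have hprodC : ∏ j ∈ Finset.range m, ((3 : ℂ) - 2 * μ ^ j) = 3 ^ m - 2 ^ m := by
    have hc : ∀ j : ℕ, (3 : ℂ) - 2 * μ ^ j = 2 * ((3 / 2 : ℂ) - μ ^ j) := by
      intro j; ring
    rw [Finset.prod_congr rfl (fun j _ => hc j), Finset.prod_mul_distrib,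
      Finset.prod_const, aux_prod_sub m hm hμ (3 / 2 : ℂ), Finset.card_range,
      mul_sub, ← mul_pow]
    norm_num
  calc ∏ j ∈ Finset.range m, ‖3 - 2 * μ ^ j‖
      = ‖∏ j ∈ Finset.range m, ((3 : ℂ) - 2 * μ ^ j)‖ := (norm_prod _ _).symm
    _ = ‖((3 ^ m - 2 ^ m : ℝ) : ℂ)‖ := by rw [hprodC]; norm_num
    _ = 3 ^ m - 2 ^ m := by
        rw [Complex.norm_real, Real.norm_eq_abs, abs_of_nonneg]
        have : (2 : ℝ) ^ m ≤ 3 ^ m := pow_le_pow_left₀ (by norm_num) (by norm_num) m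
        linarith
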